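/- Fix m ≥ 0 and λ : C → P with ‖λ‖ finite. For every ℓ ≥ 3m, the map sending a zigzag path ({λ^(r)}, {μ^(s)}) from ν_{ℓ−m} to λ[ℓ] to ({λ̃^(r)}, {μ̃^(s)}) (where ~ adds one box to the first row of the value at ι and fixes other values) is a bijection from Z(ν_{ℓ−m}, λ[ℓ]) onto Z(ν_{ℓ+1−m}, λ[ℓ+1]). In particular |Z(ν_{ℓ−m}, λ[ℓ])| = |Z(ν_{ℓ+1−m}, λ[ℓ+1])| for all ℓ ≥ 3m. -/
import Mathlib


/-- A partition: a non-increasing sequence of naturals with only finitely many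
nonzero terms.  (`f i` is the `(i+1)`-st part.) -/
def IsPartition (f : ℕ → ℕ) : Prop := Antitone f ∧ ∃ N, ∀ i, N ≤ i → f i = 0

/-- `|λ|`: the sum of the parts of a partition. -/
noncomputable def psize (f : ℕ → ℕ) : ℕ := ∑ᶠ i, f i

/-- `λ ⟶⁺ μ`: `μ` is obtained from `λ` by adding at most one box to each row. -/
def StepUp (a b : ℕ → ℕ) : Prop := ∀ i, a i ≤ b i ∧ b i ≤ a i + 1

/-- `μ ⟶⁻ λ`: `λ` is obtained from `μ` by removing at most one box from each row. -/
def StepDown (b a : ℕ → ℕ) : Prop := ∀ i, b i - 1 ≤ a i ∧ a i ≤ b i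

/-- `h̄`: add one box to the first row. -/
def hbar (f : ℕ → ℕ) : ℕ → ℕ := fun i => if i = 0 then f 0 + 1 else f i

variable {C : Type*}

/-- Pointwise `⟶⁺` for functions `C → P`. -/
def FStepUp (a b : C → ℕ → ℕ) : Prop := ∀ ρ, StepUp (a ρ) (b ρ)

/-- Pointwise `⟶⁻` for functions `C → P`. -/
def FStepDown (b a : C → ℕ → ℕ) : Prop := ∀ ρ, StepDown (b ρ) (a ρ)

/-- `‖μ‖ = ∑_ρ d(ρ)·|μ(ρ)|` for a weight function `d : C → ℕ`. -/
noncomputable def normC (d : C → ℕ) (mu : C → ℕ → ℕ) : ℕ := ∑ᶠ ρ, d ρ * psize (mu ρ)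

/-- Prepend a part `a` to a sequence. -/
def prependPart (a : ℕ) (f : ℕ → ℕ) : ℕ → ℕ := fun i => if i = 0 then a else f (i - 1)

/-- `λ[n]`: agrees with `λ` away from `ι`, and `λ[n](ι) = (n - ‖λ‖, λ₁, λ₂, …)`. -/
noncomputable def shiftFun [DecidableEq C] (d : C → ℕ) (iota : C) (l : C → ℕ → ℕ)
    (n : ℕ) : C → ℕ → ℕ :=
  fun ρ => if ρ = iota then prependPart (n - normC d l) (l iota) else l ρ

/-- `ν_k : C → P`, equal to the one-row partition `(k, 0, 0, …)` at `ι` and `0`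
elsewhere. -/
def nuK [DecidableEq C] (iota : C) (k : ℕ) : C → ℕ → ℕ :=
  fun ρ => if ρ = iota then (fun i => if i = 0 then k else 0) else 0

/-- `α̃`: apply `h̄` to the value at `ι`, keep other values. -/
def tildeF [DecidableEq C] (iota : C) (a : C → ℕ → ℕ) : C → ℕ → ℕ :=
  fun ρ => if ρ = iota then hbar (a iota) else a ρ

/-- A zigzag path `ν ⟶⁻ λ⁽¹⁾ ⟶⁺ μ⁽¹⁾ ⟶⁻ λ⁽²⁾ ⟶⁺ ⋯ ⟶⁺ μ⁽ᵐ⁾ = μ` of partition-valued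
functions with finite support, with `‖μ⁽ˢ⁾‖ = ‖ν‖ + s`.  Here `l ⟨r⟩` is `λ⁽ʳ⁺¹⁾`
and `mus ⟨s⟩` is `μ⁽ˢ⁺¹⁾`. -/
def IsZigzag (d : C → ℕ) (m : ℕ) (nu mu : C → ℕ → ℕ)
    (l mus : Fin m → C → ℕ → ℕ) : Prop :=
  (∀ r : Fin m, ∀ ρ, IsPartition (l r ρ)) ∧
  (∀ s : Fin m, ∀ ρ, IsPartition (mus s ρ)) ∧
  (∀ r : Fin m, (Function.support (l r)).Finite) ∧
  (∀ s : Fin m, (Function.support (mus s)).Finite) ∧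
  (∀ s : Fin m, normC d (mus s) = normC d nu + s.val + 1) ∧
  (∀ hm : 0 < m, FStepDown nu (l ⟨0, hm⟩)) ∧
  (∀ r : Fin m, FStepUp (l r) (mus r)) ∧
  (∀ (r : ℕ) (h1 : r + 1 < m),
      FStepDown (mus ⟨r, Nat.lt_of_succ_lt h1⟩) (l ⟨r + 1, h1⟩)) ∧
  (∀ hm : 0 < m, mus ⟨m - 1, Nat.sub_lt hm Nat.one_pos⟩ = mu) ∧
  (m = 0 → nu = mu)

/-- `Z(ν, μ)`: the set of zigzag paths from `ν` to `μ`. -/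
def Zigzags (d : C → ℕ) (m : ℕ) (nu mu : C → ℕ → ℕ) :
    Set ((Fin m → C → ℕ → ℕ) × (Fin m → C → ℕ → ℕ)) :=
  {p | IsZigzag d m nu mu p.1 p.2}

/-! ### Auxiliary lemmas -/

section Aux

lemma hbar_apply (f : ℕ → ℕ) (i : ℕ) : hbar f i = if i = 0 then f 0 + 1 else f i := rfl

lemma psize_zero : psize (0 : ℕ → ℕ) = 0 := by simp [psize]

lemma support_finite_of_partition {f : ℕ → ℕ} (hf : IsPartition f) :
    (Function.support f).Finite := by
  obtain ⟨N, hN⟩ := hf.2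
  refine Set.Finite.subset (Set.finite_Iio N) fun i hi => ?_
  simp only [Set.mem_Iio]
  by_contra h
  exact hi (hN i (le_of_not_gt h))

lemma hbar_partition {f : ℕ → ℕ} (hf : IsPartition f) : IsPartition (hbar f) := by
  obtain ⟨ha, N, hN⟩ := hf
  refine ⟨?_, N + 1, fun i hi => ?_⟩
  · intro i j hij
    by_cases hj : j = 0
    · subst hj
      have : i = 0 := Nat.le_zero.mp hij
      subst this; exact le_refl _
    · by_cases hi : i = 0
      · subst hi
        simp only [hbar, if_pos rfl, if_neg hj]
        exact (ha (Nat.zero_le j)).trans (Nat.le_succ _)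
      · simp only [hbar, if_neg hj, if_neg hi]
        exact ha hij
  · have hi0 : i ≠ 0 := by omega
    simp only [hbar, if_neg hi0]
    exact hN i (by omega)

lemma psize_hbar {f : ℕ → ℕ} (hf : (Function.support f).Finite) :
    psize (hbar f) = psize f + 1 := by
  have h1 : hbar f = fun i => f i + (if i = 0 then 1 else 0) := by
    funext i; by_cases hi : i = 0 <;> simp [hbar, hi]
  have h2 : (Function.support (fun i => if i = 0 then (1 : ℕ) else 0)).Finite := by
    refine Set.Finite.subset (Set.finite_singleton 0) fun i hi => ?_
    by_cases h : i = 0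
    · simp [h]
    · simp only [Function.mem_support, if_neg h, ne_eq, not_true_eq_false] at hi
  have h3 : ∑ᶠ i, (if i = 0 then (1 : ℕ) else 0) = 1 := by
    rw [finsum_eq_single _ 0 (fun x hx => if_neg hx)]
    rfl
  rw [psize, h1, finsum_add_distrib hf h2, h3, psize]

lemma tildeF_injective [DecidableEq C] (iota : C) :
    Function.Injective (tildeF (C := C) iota) := by
  intro a b hab
  funext ρ i
  have h := congrFun (congrFun hab ρ) i
  by_cases hρ : ρ = iota
  · rw [hρ]
    have h' : hbar (a iota) i = hbar (b iota) i := by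
      rw [hρ] at h
      simpa [tildeF] using h
    rw [hbar_apply, hbar_apply] at h'
    by_cases hi : i = 0
    · rw [if_pos hi, if_pos hi] at h'
      rw [hi]
      omega
    · rwa [if_neg hi, if_neg hi] at h'
  · simpa [tildeF, hρ] using h

lemma support_tildeF [DecidableEq C] (iota : C) {a : C → ℕ → ℕ}
    (ha : (Function.support a).Finite) :
    (Function.support (tildeF iota a)).Finite := by
  refine Set.Finite.subset (ha.union (Set.finite_singleton iota)) fun ρ hρ => ?_
  by_cases h : ρ = iota
  · exact Or.inr (by simp [h])
  · left
    simpa only [Function.mem_support, tildeF, if_neg h] using hρ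

lemma normC_tildeF [DecidableEq C] (d : C → ℕ) (iota : C) (hiota : d iota = 1)
    {a : C → ℕ → ℕ} (ha : (Function.support a).Finite)
    (hpa : (Function.support (a iota)).Finite) :
    normC d (tildeF iota a) = normC d a + 1 := by
  have key : (fun ρ => d ρ * psize (tildeF iota a ρ))
      = fun ρ => d ρ * psize (a ρ) + (if ρ = iota then 1 else 0) := by
    funext ρ
    by_cases h : ρ = iota
    · subst h
      simp [tildeF, psize_hbar hpa, hiota]
    · simp [tildeF, h]
  have hs1 : (Function.support (fun ρ => d ρ * psize (a ρ))).Finite := by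
    refine ha.subset fun ρ hρ => ?_
    simp only [Function.mem_support] at hρ ⊢
    intro h0
    exact hρ (by rw [h0, psize_zero, mul_zero])
  have hs2 : (Function.support (fun ρ => if ρ = iota then (1 : ℕ) else 0)).Finite := by
    refine Set.Finite.subset (Set.finite_singleton iota) fun ρ hρ => ?_
    by_cases h : ρ = iota
    · simp [h]
    · simp only [Function.mem_support, if_neg h, ne_eq, not_true_eq_false] at hρ
  have h3 : ∑ᶠ ρ, (if ρ = iota then (1 : ℕ) else 0) = 1 := by
    rw [finsum_eq_single _ iota (fun x hx => if_neg hx)]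
    rw [if_pos rfl]
  simp only [normC]
  rw [key, finsum_add_distrib hs1 hs2, h3]

lemma tildeF_nuK [DecidableEq C] (iota : C) (k : ℕ) :
    tildeF iota (nuK iota k) = nuK iota (k + 1) := by
  funext ρ i
  by_cases h : ρ = iota
  · by_cases hi : i = 0 <;> simp [tildeF, nuK, hbar_apply, h, hi]
  · simp [tildeF, nuK, h]

lemma psize_single (k : ℕ) : psize (fun i => if i = 0 then k else 0) = k := by
  rw [psize, finsum_eq_single _ 0 (fun x hx => by simp [hx])]
  simp

lemma normC_nuK [DecidableEq C] (d : C → ℕ) (iota : C) (hiota : d iota = 1) (k : ℕ) :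
    normC d (nuK iota k) = k := by
  rw [normC, finsum_eq_single _ iota]
  · simp [nuK, psize_single, hiota]
  · intro ρ hρ
    simp [nuK, hρ, psize_zero]

lemma stepUp_hbar_iff {a b : ℕ → ℕ} : StepUp (hbar a) (hbar b) ↔ StepUp a b := by
  constructor
  · intro h i
    have hi := h i
    simp only [hbar_apply] at hi
    by_cases hc : i = 0
    · rw [hc]
      simp only [if_pos hc] at hi
      omega
    · simp only [if_neg hc] at hi
      omega
  · intro h i
    have hi := h i
    have h0 := h 0
    simp only [hbar_apply]
    by_cases hc : i = 0
    · simp only [if_pos hc]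
      rw [hc] at hi
      omega
    · simp only [if_neg hc]
      omega

lemma stepDown_hbar_iff {a b : ℕ → ℕ} : StepDown (hbar b) (hbar a) ↔ StepDown b a := by
  constructor
  · intro h i
    have hi := h i
    simp only [hbar_apply] at hi
    by_cases hc : i = 0
    · rw [hc]
      simp only [if_pos hc] at hi
      omega
    · simp only [if_neg hc] at hi
      omega
  · intro h i
    have hi := h i
    have h0 := h 0
    simp only [hbar_apply]
    by_cases hc : i = 0
    · simp only [if_pos hc]
      rw [hc] at hi
      omega
    · simp only [if_neg hc]
      omega

lemma fstepUp_tildeF_iff [DecidableEq C] (iota : C) {a b : C → ℕ → ℕ} :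
    FStepUp (tildeF iota a) (tildeF iota b) ↔ FStepUp a b := by
  constructor <;> intro h ρ
  · have hh := h ρ
    by_cases hρ : ρ = iota
    · exact stepUp_hbar_iff.mp (by simpa [tildeF, hρ] using hh)
    · simpa [tildeF, hρ] using hh
  · by_cases hρ : ρ = iota
    · simpa [tildeF, hρ] using stepUp_hbar_iff.mpr (h iota)
    · simpa [tildeF, hρ] using h ρ

lemma fstepDown_tildeF_iff [DecidableEq C] (iota : C) {a b : C → ℕ → ℕ} :
    FStepDown (tildeF iota b) (tildeF iota a) ↔ FStepDown b a := by
  constructor <;> intro h ρ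
  · have hh := h ρ
    by_cases hρ : ρ = iota
    · exact stepDown_hbar_iff.mp (by simpa [tildeF, hρ] using hh)
    · simpa [tildeF, hρ] using hh
  · by_cases hρ : ρ = iota
    · simpa [tildeF, hρ] using stepDown_hbar_iff.mpr (h iota)
    · simpa [tildeF, hρ] using h ρ

lemma tildeF_shiftFun [DecidableEq C] (d : C → ℕ) (iota : C) (l : C → ℕ → ℕ)
    {n : ℕ} (hn : normC d l ≤ n) :
    tildeF iota (shiftFun d iota l n) = shiftFun d iota l (n + 1) := by
  funext ρ i
  by_cases hρ : ρ = iota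
  · by_cases hi : i = 0
    · have : n - normC d l + 1 = n + 1 - normC d l := by omega
      simp [tildeF, shiftFun, hbar_apply, prependPart, hρ, hi, this]
    · simp [tildeF, shiftFun, hbar_apply, prependPart, hρ, hi]
  · simp [tildeF, shiftFun, hρ]

lemma eq_nuK_shiftFun [DecidableEq C] (d : C → ℕ) (iota : C) (l : C → ℕ → ℕ)
    {n : ℕ} (h : nuK iota n = shiftFun d iota l n) : ∀ ρ, l ρ = 0 := by
  intro ρ
  by_cases hρ : ρ = iota
  · rw [hρ]
    funext i
    have hh := congrFun (congrFun h iota) (i + 1)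
    simpa [nuK, shiftFun, prependPart] using hh.symm
  · have hh := congrFun h ρ
    simpa [nuK, shiftFun, hρ] using hh.symm

lemma normC_zero_fun [DecidableEq C] (d : C → ℕ) {l : C → ℕ → ℕ}
    (h : ∀ ρ, l ρ = 0) : normC d l = 0 := by
  have : (fun ρ => d ρ * psize (l ρ)) = fun _ => 0 := by
    funext ρ; rw [h ρ, psize_zero, mul_zero]
  rw [normC, this, finsum_zero]

lemma shiftFun_eq_nuK [DecidableEq C] (d : C → ℕ) (iota : C) {l : C → ℕ → ℕ}
    (h : ∀ ρ, l ρ = 0) (n : ℕ) : shiftFun d iota l n = nuK iota n := by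
  have h0 : normC d l = 0 := normC_zero_fun d h
  funext ρ i
  by_cases hρ : ρ = iota
  · rw [hρ]
    by_cases hi : i = 0 <;>
      simp [shiftFun, nuK, prependPart, h0, h iota, hi]
  · simp [shiftFun, nuK, hρ, h ρ]

/-- Subtract one box from the first row of the value at `ι`. -/
def lowerF [DecidableEq C] (iota : C) (a : C → ℕ → ℕ) : C → ℕ → ℕ :=
  fun ρ => if ρ = iota then (fun i => if i = 0 then a iota 0 - 1 else a iota i) else a ρ

lemma tildeF_lowerF [DecidableEq C] (iota : C) {a : C → ℕ → ℕ} (h : 1 ≤ a iota 0) :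
    tildeF iota (lowerF iota a) = a := by
  funext ρ i
  by_cases hρ : ρ = iota
  · by_cases hi : i = 0
    · have h1 : a iota 0 - 1 + 1 = a iota 0 := by omega
      simp [tildeF, lowerF, hbar_apply, hρ, hi, h1]
    · simp [tildeF, lowerF, hbar_apply, hρ, hi]
  · simp [tildeF, lowerF, hρ]

lemma support_lowerF [DecidableEq C] (iota : C) {a : C → ℕ → ℕ}
    (ha : (Function.support a).Finite) :
    (Function.support (lowerF iota a)).Finite := by
  refine Set.Finite.subset (ha.union (Set.finite_singleton iota)) fun ρ hρ => ?_
  by_cases h : ρ = iota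
  · exact Or.inr (by simp [h])
  · left
    simpa only [Function.mem_support, lowerF, if_neg h] using hρ

lemma lower_partition {f : ℕ → ℕ} (hf : IsPartition f) (h : f 1 < f 0) :
    IsPartition (fun i => if i = 0 then f 0 - 1 else f i) := by
  obtain ⟨ha, N, hN⟩ := hf
  refine ⟨?_, N + 1, fun i hi => ?_⟩
  · intro i j hij
    by_cases hj : j = 0
    · subst hj
      have : i = 0 := Nat.le_zero.mp hij
      subst this; exact le_refl _
    · by_cases hi0 : i = 0
      · simp only [if_pos hi0, if_neg hj]
        have := ha (show 1 ≤ j by omega)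
        omega
      · simp only [if_neg hj, if_neg hi0]
        exact ha hij
  · simp only [if_neg (show i ≠ 0 by omega)]
    exact hN i (by omega)

lemma zigzag_bounds [DecidableEq C] (d : C → ℕ) (iota : C) {m k : ℕ}
    {mu : C → ℕ → ℕ} {L M : Fin m → C → ℕ → ℕ}
    (hz : IsZigzag d m (nuK iota k) mu L M) :
    ∀ n (h : n < m),
      (k - (n + 1) ≤ L ⟨n, h⟩ iota 0 ∧ L ⟨n, h⟩ iota 1 ≤ n) ∧
      (k - (n + 1) ≤ M ⟨n, h⟩ iota 0 ∧ M ⟨n, h⟩ iota 1 ≤ n + 1) := by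
  obtain ⟨-, -, -, -, -, hd0, hup, hdown, -, -⟩ := hz
  intro n
  induction n with
  | zero =>
    intro h
    have h1 : nuK iota k iota 0 - 1 ≤ L ⟨0, h⟩ iota 0 ∧ L ⟨0, h⟩ iota 0 ≤ nuK iota k iota 0 :=
      hd0 h iota 0
    have h2 : nuK iota k iota 1 - 1 ≤ L ⟨0, h⟩ iota 1 ∧ L ⟨0, h⟩ iota 1 ≤ nuK iota k iota 1 :=
      hd0 h iota 1
    have h3 := hup ⟨0, h⟩ iota 0
    have h4 := hup ⟨0, h⟩ iota 1
    have e0 : nuK iota k iota 0 = k := by simp [nuK]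
    have e1 : nuK iota k iota 1 = 0 := by simp [nuK]
    rw [e0] at h1
    rw [e1] at h2
    exact ⟨⟨by omega, by omega⟩, ⟨by omega, by omega⟩⟩
  | succ n ih =>
    intro h
    have hn : n < m := by omega
    have ihn := ih hn
    have h1 : M ⟨n, hn⟩ iota 0 - 1 ≤ L ⟨n + 1, h⟩ iota 0 ∧
        L ⟨n + 1, h⟩ iota 0 ≤ M ⟨n, hn⟩ iota 0 := hdown n h iota 0
    have h2 : M ⟨n, hn⟩ iota 1 - 1 ≤ L ⟨n + 1, h⟩ iota 1 ∧
        L ⟨n + 1, h⟩ iota 1 ≤ M ⟨n, hn⟩ iota 1 := hdown n h iota 1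
    have h3 := hup ⟨n + 1, h⟩ iota 0
    have h4 := hup ⟨n + 1, h⟩ iota 1
    obtain ⟨-, hM⟩ := ihn
    exact ⟨⟨by omega, by omega⟩, ⟨by omega, by omega⟩⟩

lemma shift_top_bound [DecidableEq C] (d : C → ℕ) (iota : C) {m k n : ℕ}
    {l : C → ℕ → ℕ} {L M : Fin m → C → ℕ → ℕ}
    (hz : IsZigzag d m (nuK iota k) (shiftFun d iota l n) L M) (hm : 0 < m) :
    k - m ≤ n - normC d l := by
  have hb : k - (m - 1 + 1) ≤ M ⟨m - 1, Nat.sub_lt hm Nat.one_pos⟩ iota 0 :=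
    (zigzag_bounds d iota hz (m - 1) (Nat.sub_lt hm Nat.one_pos)).2.1
  have hlast := hz.2.2.2.2.2.2.2.2.1 hm
  rw [hlast] at hb
  have hs : shiftFun d iota l n iota 0 = n - normC d l := by
    simp [shiftFun, prependPart]
  rw [hs] at hb
  omega

end Aux

/-- For `ℓ ≥ 3m`, applying `~` (adding one box to the first row of the value at
`ι`) to every term of a zigzag path gives a bijection
`Z(ν_{ℓ-m}, λ[ℓ]) → Z(ν_{ℓ+1-m}, λ[ℓ+1])`; in particular these two sets have
the same cardinality. -/
theorem stmt_7 [DecidableEq C] (d : C → ℕ) (hd : ∀ ρ, 0 < d ρ) (iota : C)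
    (hiota : d iota = 1) (m : ℕ) (l : C → ℕ → ℕ)
    (hp : ∀ ρ, IsPartition (l ρ)) (hfin : (Function.support l).Finite)
    (el : ℕ) (hel : 3 * m ≤ el) :
    Set.BijOn
      (fun p : (Fin m → C → ℕ → ℕ) × (Fin m → C → ℕ → ℕ) =>
        ((fun r => tildeF iota (p.1 r)), (fun s => tildeF iota (p.2 s))))
      (Zigzags d m (nuK iota (el - m)) (shiftFun d iota l el))
      (Zigzags d m (nuK iota (el + 1 - m)) (shiftFun d iota l (el + 1))) ∧
    (Zigzags d m (nuK iota (el - m)) (shiftFun d iota l el)).ncard =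
      (Zigzags d m (nuK iota (el + 1 - m)) (shiftFun d iota l (el + 1))).ncard := by
  have hmle : m ≤ el := by omega
  have hmaps : Set.MapsTo
      (fun p : (Fin m → C → ℕ → ℕ) × (Fin m → C → ℕ → ℕ) =>
        ((fun r => tildeF iota (p.1 r)), (fun s => tildeF iota (p.2 s))))
      (Zigzags d m (nuK iota (el - m)) (shiftFun d iota l el))
      (Zigzags d m (nuK iota (el + 1 - m)) (shiftFun d iota l (el + 1))) := by
    rintro ⟨L, M⟩ hz
    simp only [Zigzags, Set.mem_setOf_eq] at hz ⊢
    have hzc := hz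
    obtain ⟨hP1, hP2, hF1, hF2, hN, hD0, hU, hD, hlast, h0⟩ := hzc
    refine ⟨fun r ρ => ?_, fun s ρ => ?_, fun r => support_tildeF iota (hF1 r),
      fun s => support_tildeF iota (hF2 s), fun s => ?_, fun hm => ?_, fun r => ?_,
      fun r h1 => ?_, fun hm => ?_, fun h0m => ?_⟩
    · show IsPartition (tildeF iota (L r) ρ)
      by_cases hρ : ρ = iota
      · rw [hρ]
        simpa [tildeF] using hbar_partition (hP1 r iota)
      · simpa [tildeF, hρ] using hP1 r ρ
    · show IsPartition (tildeF iota (M s) ρ)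
      by_cases hρ : ρ = iota
      · rw [hρ]
        simpa [tildeF] using hbar_partition (hP2 s iota)
      · simpa [tildeF, hρ] using hP2 s ρ
    · show normC d (tildeF iota (M s)) = normC d (nuK iota (el + 1 - m)) + ↑s + 1
      have hNs := hN s
      rw [normC_nuK d iota hiota] at hNs
      rw [normC_tildeF d iota hiota (hF2 s) (support_finite_of_partition (hP2 s iota)),
        hNs, normC_nuK d iota hiota]
      omega
    · show FStepDown (nuK iota (el + 1 - m)) (tildeF iota (L ⟨0, hm⟩))
      rw [show el + 1 - m = (el - m) + 1 by omega, ← tildeF_nuK]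
      exact (fstepDown_tildeF_iff iota).mpr (hD0 hm)
    · show FStepUp (tildeF iota (L r)) (tildeF iota (M r))
      exact (fstepUp_tildeF_iff iota).mpr (hU r)
    · show FStepDown (tildeF iota (M ⟨r, Nat.lt_of_succ_lt h1⟩)) (tildeF iota (L ⟨r + 1, h1⟩))
      exact (fstepDown_tildeF_iff iota).mpr (hD r h1)
    · show tildeF iota (M ⟨m - 1, Nat.sub_lt hm Nat.one_pos⟩) = shiftFun d iota l (el + 1)
      have hnl : normC d l ≤ el := by
        have hb := shift_top_bound d iota hz hm
        omega
      rw [hlast hm, tildeF_shiftFun d iota l hnl]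
    · have h00 := h0 h0m
      rw [h0m, Nat.sub_zero] at h00 ⊢
      have hl0 := eq_nuK_shiftFun d iota l h00
      rw [shiftFun_eq_nuK d iota hl0]
  have hinj : Set.InjOn
      (fun p : (Fin m → C → ℕ → ℕ) × (Fin m → C → ℕ → ℕ) =>
        ((fun r => tildeF iota (p.1 r)), (fun s => tildeF iota (p.2 s))))
      (Zigzags d m (nuK iota (el - m)) (shiftFun d iota l el)) := by
    rintro ⟨pL, pM⟩ - ⟨qL, qM⟩ - h
    simp only [Prod.mk.injEq] at h ⊢
    exact ⟨funext fun r => tildeF_injective iota (congrFun h.1 r),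
      funext fun s => tildeF_injective iota (congrFun h.2 s)⟩
  have hsurj : Set.SurjOn
      (fun p : (Fin m → C → ℕ → ℕ) × (Fin m → C → ℕ → ℕ) =>
        ((fun r => tildeF iota (p.1 r)), (fun s => tildeF iota (p.2 s))))
      (Zigzags d m (nuK iota (el - m)) (shiftFun d iota l el))
      (Zigzags d m (nuK iota (el + 1 - m)) (shiftFun d iota l (el + 1))) := by
    rintro ⟨L', M'⟩ hq
    simp only [Zigzags, Set.mem_setOf_eq] at hq
    have hqc := hq
    obtain ⟨hP1, hP2, hF1, hF2, hN, hD0, hU, hD, hlast, h0⟩ := hqc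
    have hbnd := zigzag_bounds d iota hq
    have hL0 : ∀ r : Fin m, 1 ≤ L' r iota 0 ∧ L' r iota 1 < L' r iota 0 := by
      intro r
      have hb := hbnd r.val r.isLt
      simp only [Fin.eta] at hb
      obtain ⟨⟨hb1, hb2⟩, -⟩ := hb
      have hrm := r.isLt
      exact ⟨by omega, by omega⟩
    have hM0 : ∀ s : Fin m, 1 ≤ M' s iota 0 ∧ M' s iota 1 < M' s iota 0 := by
      intro s
      have hb := hbnd s.val s.isLt
      simp only [Fin.eta] at hb
      obtain ⟨-, hb1, hb2⟩ := hb
      have hsm := s.isLt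
      exact ⟨by omega, by omega⟩
    have htlL : ∀ r : Fin m, tildeF iota (lowerF iota (L' r)) = L' r :=
      fun r => tildeF_lowerF iota (hL0 r).1
    have htlM : ∀ s : Fin m, tildeF iota (lowerF iota (M' s)) = M' s :=
      fun s => tildeF_lowerF iota (hM0 s).1
    have hlpL : ∀ r : Fin m, ∀ ρ, IsPartition (lowerF iota (L' r) ρ) := by
      intro r ρ
      by_cases hρ : ρ = iota
      · rw [hρ]
        simpa [lowerF] using lower_partition (hP1 r iota) (hL0 r).2
      · simpa [lowerF, hρ] using hP1 r ρ
    have hlpM : ∀ s : Fin m, ∀ ρ, IsPartition (lowerF iota (M' s) ρ) := by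
      intro s ρ
      by_cases hρ : ρ = iota
      · rw [hρ]
        simpa [lowerF] using lower_partition (hP2 s iota) (hM0 s).2
      · simpa [lowerF, hρ] using hP2 s ρ
    refine ⟨(fun r => lowerF iota (L' r), fun s => lowerF iota (M' s)), ?_, ?_⟩
    · simp only [Zigzags, Set.mem_setOf_eq]
      refine ⟨fun r ρ => hlpL r ρ, fun s ρ => hlpM s ρ, fun r => support_lowerF iota (hF1 r),
        fun s => support_lowerF iota (hF2 s), fun s => ?_, fun hm => ?_, fun r => ?_,
        fun r h1 => ?_, fun hm => ?_, fun h0m => ?_⟩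
      · show normC d (lowerF iota (M' s)) = normC d (nuK iota (el - m)) + ↑s + 1
        have heq := normC_tildeF d iota hiota (support_lowerF iota (hF2 s))
          (support_finite_of_partition (hlpM s iota))
        rw [htlM s] at heq
        have hNs := hN s
        rw [normC_nuK d iota hiota] at hNs
        rw [normC_nuK d iota hiota]
        omega
      · show FStepDown (nuK iota (el - m)) (lowerF iota (L' ⟨0, hm⟩))
        have h := hD0 hm
        rw [← htlL ⟨0, hm⟩, show el + 1 - m = (el - m) + 1 by omega, ← tildeF_nuK] at h
        exact (fstepDown_tildeF_iff iota).mp h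
      · show FStepUp (lowerF iota (L' r)) (lowerF iota (M' r))
        have h := hU r
        rw [← htlL r, ← htlM r] at h
        exact (fstepUp_tildeF_iff iota).mp h
      · show FStepDown (lowerF iota (M' ⟨r, Nat.lt_of_succ_lt h1⟩))
          (lowerF iota (L' ⟨r + 1, h1⟩))
        have h := hD r h1
        rw [← htlM ⟨r, Nat.lt_of_succ_lt h1⟩, ← htlL ⟨r + 1, h1⟩] at h
        exact (fstepDown_tildeF_iff iota).mp h
      · show lowerF iota (M' ⟨m - 1, Nat.sub_lt hm Nat.one_pos⟩) = shiftFun d iota l el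
        have hnl : normC d l ≤ el := by
          have hb := shift_top_bound d iota hq hm
          omega
        apply tildeF_injective iota
        rw [htlM ⟨m - 1, Nat.sub_lt hm Nat.one_pos⟩, hlast hm, tildeF_shiftFun d iota l hnl]
      · have h00 := h0 h0m
        rw [h0m, Nat.sub_zero] at h00 ⊢
        have hl0 := eq_nuK_shiftFun d iota l h00
        rw [shiftFun_eq_nuK d iota hl0]
    · simp only [Prod.mk.injEq]
      exact ⟨funext fun r => htlL r, funext fun s => htlM s⟩
  have hbij : Set.BijOn
      (fun p : (Fin m → C → ℕ → ℕ) × (Fin m → C → ℕ → ℕ) =>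
        ((fun r => tildeF iota (p.1 r)), (fun s => tildeF iota (p.2 s))))
      (Zigzags d m (nuK iota (el - m)) (shiftFun d iota l el))
      (Zigzags d m (nuK iota (el + 1 - m)) (shiftFun d iota l (el + 1))) :=
    ⟨hmaps, hinj, hsurj⟩
  refine ⟨hbij, ?_⟩
  rw [← hbij.image_eq, Set.ncard_image_of_injOn hbij.injOn]
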